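/- For every odd n ≥ 3, the polynomial identity X·f_n(X) = ψ^{(n+1)/2}(X) − ψ^{(n−1)/2}(X) holds in ℚ[X]. -/

import Mathlib

noncomputable section

open Polynomial

/-- `ψ^i(X) := Σ_{j=1}^{i} (C(i,j)·C(i+j−1,j)/C(2j−1,j))·X^j ∈ ℚ[X]`; `ψ^0 = 0`. -/
def psiPoly (i : ℕ) : ℚ[X] :=
  ∑ j ∈ Finset.Icc 1 i,
    C (((i.choose j : ℚ) * ((i + j - 1).choose j : ℚ)) / ((2 * j - 1).choose j : ℚ)) * X ^ j

/-- For odd `n ≥ 3`,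
`f_n(X) := n + Σ_{j=1}^{(n−3)/2} (n·(n²−1²)·(n²−3²)⋯(n²−(2j−1)²)/(2^{2j}·(2j+1)!))·X^j
  + X^{(n−1)/2} ∈ ℚ[X]`. -/
def fPoly (n : ℕ) : ℚ[X] :=
  C (n : ℚ) +
    ∑ j ∈ Finset.Icc 1 ((n - 3) / 2),
      C (((n : ℚ) * ∏ i ∈ Finset.Icc 1 j, ((n : ℚ) ^ 2 - (2 * (i : ℚ) - 1) ^ 2)) /
          (2 ^ (2 * j) * ((2 * j + 1).factorial : ℚ))) * X ^ j +
    X ^ ((n - 1) / 2)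

/-- `(X+2)/2 ∈ ℚ[X]`. -/
def halfXAddTwo : ℚ[X] := C (1 / 2 : ℚ) * (X + 2)


lemma prodA (m j : ℕ) : ∏ i ∈ Finset.Icc 1 j, ((m : ℚ) + i) = (m+j).factorial / m.factorial := by
  induction j with
  | zero => simp [div_self (a := (m.factorial:ℚ)) (by exact_mod_cast m.factorial_ne_zero)]
  | succ j ih =>
    rw [Finset.prod_Icc_succ_top (by omega), ih, show m+(j+1) = (m+j)+1 from rfl, Nat.factorial_succ]
    have := m.factorial_ne_zero
    field_simp
    push_cast; ring

lemma prodB (m j : ℕ) (h : j ≤ m) : ∏ i ∈ Finset.Icc 1 j, ((m:ℚ)+1-i) = m.factorial / (m-j).factorial := by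
  induction j with
  | zero => simp [div_self (a := (m.factorial:ℚ)) (by exact_mod_cast m.factorial_ne_zero)]
  | succ j ih =>
    rw [Finset.prod_Icc_succ_top (by omega), ih (by omega)]
    rw [show m - j = (m-(j+1))+1 by omega, Nat.factorial_succ]
    have h1 : ((m-(j+1)).factorial : ℚ) ≠ 0 := by exact_mod_cast (m-(j+1)).factorial_ne_zero
    have h2 : ((m - (j+1) : ℕ) : ℚ) + 1 = m - j := by
      rw [Nat.cast_sub (by omega)]; push_cast; ring
    have h3 : ((m:ℚ) - j) ≠ 0 := by
      have : (j:ℚ) < m := by exact_mod_cast (by omega : j < m)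
      intro hc; nlinarith
    push_cast
    rw [h2, div_mul_eq_mul_div, div_eq_div_iff (by exact mul_ne_zero h3 h1) h1]
    ring

lemma prodMain (m j : ℕ) (h : j ≤ m) :
    ∏ i ∈ Finset.Icc 1 j, ((2*(m:ℚ)+1)^2 - (2*(i:ℚ)-1)^2)
      = 4^j * (((m+j).factorial : ℚ) / m.factorial) * ((m.factorial : ℚ) / (m-j).factorial) := by
  have : ∀ i ∈ Finset.Icc 1 j, (2*(m:ℚ)+1)^2 - (2*(i:ℚ)-1)^2
      = 4 * (((m:ℚ) + i) * ((m:ℚ)+1-i)) := by intro i _; ring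
  rw [Finset.prod_congr rfl this, Finset.prod_mul_distrib, Finset.prod_const,
    Finset.prod_mul_distrib, prodA, prodB m j h, Nat.card_Icc]
  simp [mul_assoc]

lemma keyId (m j : ℕ) (hj : j + 1 ≤ m) :
    (((m+1).choose (j+1) : ℚ) * ((m+1+j).choose (j+1)) - (m.choose (j+1)) * ((m+j).choose (j+1)))
        / ((2*j+1).choose (j+1))
    = (2*(m:ℚ)+1) * (∏ i ∈ Finset.Icc 1 j, ((2*(m:ℚ)+1)^2 - (2*(i:ℚ)-1)^2))
        / (2^(2*j) * ((2*j+1).factorial)) := by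
  rw [prodMain m j (by omega)]
  rw [Nat.cast_choose ℚ (show j+1 ≤ m+1 by omega),
      Nat.cast_choose ℚ (show j+1 ≤ m+1+j by omega),
      Nat.cast_choose ℚ (show j+1 ≤ m by omega),
      Nat.cast_choose ℚ (show j+1 ≤ m+j by omega),
      Nat.cast_choose ℚ (show j+1 ≤ 2*j+1 by omega)]
  rw [show m+1-(j+1) = m-j by omega, show m+1+j-(j+1) = m from by omega,
      show m+j-(j+1) = m-1 by omega, show 2*j+1-(j+1) = j by omega]
  -- factorial expansions
  have e1 : ((m+1).factorial : ℚ) = (m+1) * m.factorial := by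
    rw [Nat.factorial_succ]; push_cast; ring
  have e2 : ((m+1+j).factorial : ℚ) = (m+1+j) * (m+j).factorial := by
    rw [show m+1+j = (m+j)+1 by omega, Nat.factorial_succ]; push_cast; ring
  have e3 : ((m-j).factorial : ℚ) = ((m:ℚ)-j) * (m-(j+1)).factorial := by
    rw [show m-j = (m-(j+1))+1 by omega, Nat.factorial_succ]
    have hc : ((m-(j+1):ℕ):ℚ) = (m:ℚ)-(j+1) := by
      rw [Nat.cast_sub (by omega)]; push_cast; ring
    push_cast [hc]; ring
  have e4 : (m.factorial : ℚ) = m * (m-1).factorial := by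
    rw [show m = (m-1)+1 by omega, Nat.factorial_succ, show m-1+1 = m by omega]
    push_cast; ring
  have e5 : ((j+1).factorial : ℚ) = (j+1) * j.factorial := by
    rw [Nat.factorial_succ]; push_cast; ring
  rw [e1, e2, e3, e4, e5]
  have f0 : (0:ℚ) < m := by exact_mod_cast (by omega : 0 < m)
  have f1 : ((m:ℚ)-j) ≠ 0 := by
    have : (j:ℚ) < m := by exact_mod_cast (by omega : j < m)
    exact ne_of_gt (by linarith)
  have f2 : ((m:ℚ)-(j+1)) ≠ 0 ∨ True := Or.inr trivial
  have g1 : ((m+j).factorial : ℚ) ≠ 0 := by exact_mod_cast (m+j).factorial_ne_zero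
  have g2 : ((m-(j+1)).factorial : ℚ) ≠ 0 := by exact_mod_cast (m-(j+1)).factorial_ne_zero
  have g3 : ((m-1).factorial : ℚ) ≠ 0 := by exact_mod_cast (m-1).factorial_ne_zero
  have g4 : (j.factorial : ℚ) ≠ 0 := by exact_mod_cast j.factorial_ne_zero
  have g5 : ((2*j+1).factorial : ℚ) ≠ 0 := by exact_mod_cast (2*j+1).factorial_ne_zero
  have g6 : (m:ℚ) ≠ 0 := ne_of_gt f0
  rw [show (4:ℚ)^j = 2^(2*j) by rw [pow_mul]; norm_num]
  field_simp
  ring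

lemma sum_Icc1 {M : Type*} [AddCommMonoid M] (f : ℕ → M) (b : ℕ) :
    ∑ i ∈ Finset.Icc 1 b, f i = ∑ i ∈ Finset.range b, f (1+i) := by
  rw [← Finset.Ico_add_one_right_eq_Icc, Finset.sum_Ico_eq_sum_range]
  simp

/-- For every odd `n ≥ 3`,
`X·f_n(X) = ψ^{(n+1)/2}(X) − ψ^{(n−1)/2}(X)` in `ℚ[X]`. -/
theorem X_mul_fPoly_eq_psiPoly_sub (n : ℕ) (hodd : Odd n) (hn : 3 ≤ n) :
    X * fPoly n = psiPoly ((n + 1) / 2) - psiPoly ((n - 1) / 2) := by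
  obtain ⟨m, rfl⟩ : ∃ m, n = 2 * m + 3 := ⟨(n-3)/2, by obtain ⟨k,hk⟩ := hodd; omega⟩
  unfold fPoly psiPoly
  rw [show (2*m+3+1)/2 = m+2 by omega, show (2*m+3-1)/2 = m+1 by omega,
      show (2*m+3-3)/2 = m by omega]
  rw [sum_Icc1, sum_Icc1, sum_Icc1]
  rw [show m+2 = (m+1)+1 by omega]
  rw [Finset.sum_range_succ]
  rw [add_sub_right_comm, ← Finset.sum_sub_distrib, Finset.sum_range_succ']
  have h0 : (X : ℚ[X]) * C ((2*m+3 : ℕ) : ℚ) =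
      C ((((m+1+1).choose (1+0) : ℚ) * ((m+1+1+(1+0)-1).choose (1+0))) / ((2*(1+0)-1).choose (1+0))) * X ^ (1+0)
      - C ((((m+1).choose (1+0) : ℚ) * ((m+1+(1+0)-1).choose (1+0))) / ((2*(1+0)-1).choose (1+0))) * X ^ (1+0) := by
    norm_num [Nat.choose_one_right]
    push_cast
    simp only [map_ofNat]
    ring
  have hcpos : (0:ℚ) < ((m+1+1+(1+(m+1))-1).choose (1+(m+1)) : ℚ) := by
    exact_mod_cast Nat.choose_pos (by omega)
  have htop : (X : ℚ[X]) * X ^ (m+1) =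
      C ((((m+1+1).choose (1+(m+1)) : ℚ) * ((m+1+1+(1+(m+1))-1).choose (1+(m+1)))) / ((2*(1+(m+1))-1).choose (1+(m+1)))) * X ^ (1+(m+1)) := by
    rw [show (m+1+1).choose (1+(m+1)) = 1 by rw [show 1+(m+1) = m+1+1 by omega, Nat.choose_self],
        show 2*(1+(m+1))-1 = m+1+1+(1+(m+1))-1 by omega]
    rw [Nat.cast_one, one_mul, div_self (ne_of_gt hcpos), map_one, one_mul]
    ring
  have hsum : (X : ℚ[X]) * (∑ i ∈ Finset.range m,
        C ((((2*m+3:ℕ):ℚ) * ∏ i' ∈ Finset.Icc 1 (1 + i), (((2*m+3:ℕ):ℚ) ^ 2 - (2 * (i':ℚ) - 1) ^ 2)) /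
            (2 ^ (2 * (1 + i)) * ((2 * (1 + i) + 1).factorial : ℚ))) * X ^ (1 + i)) =
      ∑ k ∈ Finset.range m,
        (C ((((m+1+1).choose (1+(k+1)) : ℚ) * ((m+1+1+(1+(k+1))-1).choose (1+(k+1)))) /
              ((2*(1+(k+1))-1).choose (1+(k+1)))) * X ^ (1+(k+1)) -
         C ((((m+1).choose (1+(k+1)) : ℚ) * ((m+1+(1+(k+1))-1).choose (1+(k+1)))) /
              ((2*(1+(k+1))-1).choose (1+(k+1)))) * X ^ (1+(k+1))) := by
    rw [Finset.mul_sum]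
    refine Finset.sum_congr rfl (fun i hi => ?_)
    rw [← sub_mul, ← C_sub, div_sub_div_same]
    have hk := keyId (m+1) (i+1) (by simp at hi; omega)
    rw [show (X:ℚ[X]) * (C ((((2*m+3:ℕ):ℚ) * ∏ i' ∈ Finset.Icc 1 (1 + i), (((2*m+3:ℕ):ℚ) ^ 2 - (2 * (i':ℚ) - 1) ^ 2)) /
            (2 ^ (2 * (1 + i)) * ((2 * (1 + i) + 1).factorial : ℚ))) * X ^ (1 + i))
        = C ((((2*m+3:ℕ):ℚ) * ∏ i' ∈ Finset.Icc 1 (1 + i), (((2*m+3:ℕ):ℚ) ^ 2 - (2 * (i':ℚ) - 1) ^ 2)) /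
            (2 ^ (2 * (1 + i)) * ((2 * (1 + i) + 1).factorial : ℚ))) * X ^ (1 + (i+1)) by ring]
    congr 1
    rw [show 1+(i+1) = i+1+1 by omega, show m+1+1+(i+1+1)-1 = m+1+1+(i+1) by omega,
        show m+1+(i+1+1)-1 = m+1+(i+1) by omega, show 2*(i+1+1)-1 = 2*(i+1)+1 by omega,
        show 1+i = i+1 by omega,
        show ((2*m+3:ℕ):ℚ) = 2*((m+1:ℕ):ℚ)+1 by push_cast; ring]
    exact congrArg C hk.symm
  linear_combination h0 + hsum + htop
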